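/- The logarithmic Mahler measure of the polynomial x + y − 1 satisfies 2π · m(x + y − 1) = D(e^{iπ/3}) − D(e^{−iπ/3}), where D is the Bloch–Wigner dilogarithm. -/

import Mathlib

open scoped Real

/-- The logarithmic Mahler measure of a two-variable (Laurent) polynomial expression,
given as a function `ℂ → ℂ → ℂ`:
`m(P) = (2π)⁻² ∫₀^{2π} ∫₀^{2π} log |P(e^{iθ}, e^{iφ})| dθ dφ`. -/
noncomputable def mahlerMeasure2 (P : ℂ → ℂ → ℂ) : ℝ :=
  (1 / (2 * π) ^ 2) *
    ∫ θ in (0:ℝ)..(2 * π), ∫ φ in (0:ℝ)..(2 * π),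
      Real.log (‖P (Complex.exp (θ * Complex.I)) (Complex.exp (φ * Complex.I))‖)

/-- The dilogarithm `Li₂`, the analytic continuation of `∑_{n ≥ 1} zⁿ / n²`
(which is given for `|z| ≤ 1`), via the classical integral formula
`Li₂(z) = -∫₀¹ log(1 - z t) / t dt` (principal branch). -/
noncomputable def Li2 (z : ℂ) : ℂ :=
  -∫ t in (0:ℝ)..1, Complex.log (1 - z * t) / t

/-- The Bloch–Wigner dilogarithm `D(z) = Im(Li₂(z)) + arg(1 - z) · log |z|`. -/
noncomputable def blochWigner (z : ℂ) : ℝ :=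
  (Li2 z).im + (1 - z).arg * Real.log (‖z‖)


open Complex MeasureTheory intervalIntegral Metric Set
open scoped Interval


lemma meanvalue_log_abs (a : ℂ) (ha : ‖a‖ < 1) :
    ∫ φ in (0:ℝ)..(2*π), Real.log (‖1 + a * Complex.exp (φ * Complex.I)‖) = 0 := by
  set f : ℂ → ℂ := fun w => Complex.log (1 + a * w) with hf
  have hslit : ∀ w : ℂ, ‖w‖ ≤ 1 → (1 + a * w) ∈ Complex.slitPlane := by
    intro w hw
    refine Complex.mem_slitPlane_iff.2 (Or.inl ?_)
    have h1 : |(a * w).re| ≤ ‖a * w‖ := Complex.abs_re_le_norm _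
    have h2 : ‖a * w‖ = ‖a‖ * ‖w‖ := norm_mul _ _
    have h3 : ‖a‖ * ‖w‖ ≤ ‖a‖ * 1 :=
      mul_le_mul_of_nonneg_left hw (norm_nonneg a)
    have : (1 + a * w).re = 1 + (a * w).re := by simp
    rw [this]
    have := abs_le.1 h1
    nlinarith
  have hd : DifferentiableOn ℂ f (closedBall 0 1) := by
    intro w hw
    rw [Metric.mem_closedBall, dist_zero_right] at hw
    exact (((differentiableAt_const _).add
      ((differentiableAt_const _).mul differentiableAt_id)).clog
      (hslit w hw)).differentiableWithinAt
  have h0 : (0:ℂ) ∈ ball (0:ℂ) 1 := by simp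
  have key := hd.circleIntegral_sub_inv_smul h0
  have hf0 : f 0 = 0 := by simp [hf]
  rw [hf0, smul_zero] at key
  -- unfold circle integral
  rw [circleIntegral] at key
  have hinteq : ∀ θ ∈ Set.uIcc (0:ℝ) (2*π),
      deriv (circleMap 0 1) θ • ((circleMap 0 1 θ - 0)⁻¹ • f (circleMap 0 1 θ)) =
        Complex.I • f (Complex.exp (θ * Complex.I)) := by
    intro θ _
    have hne : circleMap 0 1 θ ≠ 0 := circleMap_ne_center one_ne_zero
    rw [deriv_circleMap]
    rw [sub_zero]
    rw [smul_eq_mul, smul_eq_mul, smul_eq_mul]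
    have hne' : Complex.exp ((θ:ℂ) * Complex.I) ≠ 0 := Complex.exp_ne_zero _
    rw [circleMap_zero]
    rw [Complex.ofReal_one, one_mul]
    field_simp
  rw [intervalIntegral.integral_congr hinteq] at key
  rw [intervalIntegral.integral_smul] at key
  have key2 : (∫ θ in (0:ℝ)..(2*π), f (Complex.exp (θ * Complex.I))) = 0 := by
    have := smul_eq_zero.1 key
    rcases this with h | h
    · exact absurd h Complex.I_ne_zero
    · exact h
  -- continuity / integrability
  have hcont : Continuous fun θ : ℝ => f (Complex.exp (θ * Complex.I)) := by
    have hbase : Continuous fun θ : ℝ => 1 + a * Complex.exp (θ * Complex.I) := by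
      continuity
    exact hbase.clog fun θ => hslit _ (by simp [Complex.norm_exp])
  have hint : IntervalIntegrable (fun θ : ℝ => f (Complex.exp (θ * Complex.I)))
      volume 0 (2*π) := hcont.intervalIntegrable _ _
  have := Complex.reCLM.intervalIntegral_comp_comm hint
  rw [key2] at this
  simp only [map_zero] at this
  calc ∫ φ in (0:ℝ)..(2*π), Real.log (‖1 + a * Complex.exp (φ * Complex.I)‖)
      = ∫ φ in (0:ℝ)..(2*π), Complex.reCLM (f (Complex.exp (φ * Complex.I))) := by
        refine intervalIntegral.integral_congr fun θ _ => ?_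
        simp [hf, Complex.log_re]
    _ = 0 := this

lemma jensen_circle (a : ℂ) (ha : ‖a‖ ≠ 1) :
    ∫ φ in (0:ℝ)..(2*π), Real.log (‖a + Complex.exp (φ * Complex.I)‖) =
      2 * π * max (Real.log (‖a‖)) 0 := by
  rcases lt_or_gt_of_ne ha with h | h
  · -- |a| < 1
    set f : ℝ → ℝ := fun ψ => Real.log (‖1 + a * Complex.exp (ψ * Complex.I)‖)
      with hfdef
    have habs : ∀ φ : ℝ, Real.log (‖a + Complex.exp (φ * Complex.I)‖) = f (-φ) := by
      intro φ
      have key : a + Complex.exp (φ * Complex.I) =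
          Complex.exp (φ * Complex.I) * (1 + a * Complex.exp ((-φ : ℝ) * Complex.I)) := by
        push_cast
        rw [mul_add, mul_one, mul_comm (Complex.exp _) (a * _), mul_assoc, ← Complex.exp_add]
        ring_nf
        rw [Complex.exp_zero]
        ring
      simp only [hfdef]
      rw [key, norm_mul, Complex.norm_exp]
      push_cast
      simp
    have hper : Function.Periodic f (2*π) := by
      intro x
      simp only [hfdef]
      congr 2
      push_cast
      rw [add_mul, Complex.exp_add, Complex.exp_two_pi_mul_I, mul_one]
    have hneg := intervalIntegral.integral_comp_neg (a := (0:ℝ)) (b := 2*π) f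
    rw [neg_zero] at hneg
    have hper2 := hper.intervalIntegral_add_eq (-(2*π)) 0
    simp only [neg_add_cancel, zero_add] at hper2
    calc ∫ φ in (0:ℝ)..(2*π), Real.log (‖a + Complex.exp (φ * Complex.I)‖)
        = ∫ φ in (0:ℝ)..(2*π), f (-φ) := intervalIntegral.integral_congr fun φ _ => habs φ
      _ = ∫ ψ in (-(2*π):ℝ)..(0:ℝ), f ψ := hneg
      _ = ∫ ψ in (0:ℝ)..(2*π), f ψ := hper2
      _ = 0 := meanvalue_log_abs a h
      _ = 2 * π * max (Real.log (‖a‖)) 0 := by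
          rw [max_eq_right (Real.log_nonpos (norm_nonneg a) h.le), mul_zero]
  · -- |a| > 1
    have ha0 : a ≠ 0 := by
      intro h0; rw [h0] at h; simp at h; linarith
    have hinv : ‖a⁻¹‖ < 1 := by
      rw [norm_inv, inv_lt_one_iff₀]; right; exact h
    have hne : ∀ φ : ℝ, (1 + a⁻¹ * Complex.exp (φ * Complex.I)) ≠ 0 := by
      intro φ hz
      have habs1 : ‖a⁻¹ * Complex.exp (φ * Complex.I)‖ < 1 := by
        rw [norm_mul, Complex.norm_exp]; simpa using hinv
      rw [add_eq_zero_iff_eq_neg] at hz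
      have h1 : a⁻¹ * Complex.exp (φ * Complex.I) = -1 := neg_eq_iff_eq_neg.1 hz.symm
      rw [h1] at habs1
      simp at habs1
    have habs : ∀ φ : ℝ, Real.log (‖a + Complex.exp (φ * Complex.I)‖) =
        Real.log (‖a‖) +
          Real.log (‖1 + a⁻¹ * Complex.exp (φ * Complex.I)‖) := by
      intro φ
      have key : a + Complex.exp (φ * Complex.I) =
          a * (1 + a⁻¹ * Complex.exp (φ * Complex.I)) := by
        rw [mul_add, mul_one, ← mul_assoc, mul_inv_cancel₀ ha0, one_mul]
      rw [key, norm_mul, Real.log_mul (by positivity)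
        (norm_pos_iff.2 (hne φ)).ne']
    have hcont : Continuous fun φ : ℝ =>
        Real.log (‖1 + a⁻¹ * Complex.exp (φ * Complex.I)‖) := by
      have hb : Continuous fun φ : ℝ => ‖1 + a⁻¹ * Complex.exp (φ * Complex.I)‖ :=
        continuous_norm.comp (by continuity)
      exact hb.log fun φ => (norm_pos_iff.2 (hne φ)).ne'
    calc ∫ φ in (0:ℝ)..(2*π), Real.log (‖a + Complex.exp (φ * Complex.I)‖)
        = ∫ φ in (0:ℝ)..(2*π), (Real.log (‖a‖) +
            Real.log (‖1 + a⁻¹ * Complex.exp (φ * Complex.I)‖)) :=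
          intervalIntegral.integral_congr fun φ _ => habs φ
      _ = (∫ _ in (0:ℝ)..(2*π), Real.log (‖a‖)) +
            ∫ φ in (0:ℝ)..(2*π), Real.log (‖1 + a⁻¹ * Complex.exp (φ * Complex.I)‖) :=
          intervalIntegral.integral_add (intervalIntegrable_const)
            (hcont.intervalIntegrable _ _)
      _ = 2 * π * max (Real.log (‖a‖)) 0 := by
          rw [meanvalue_log_abs a⁻¹ hinv, intervalIntegral.integral_const,
            max_eq_left (Real.log_nonneg h.le), smul_eq_mul]
          ring

lemma cos_near (x y : ℝ) : Real.cos x ≤ Real.cos y + |x - y| := by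
  have h1 : Real.cos x - Real.cos y =
      -2 * Real.sin ((x + y)/2) * Real.sin ((x - y)/2) := Real.cos_sub_cos x y
  have h2 : |Real.sin ((x+y)/2)| ≤ 1 := abs_le.2 ⟨Real.neg_one_le_sin _, Real.sin_le_one _⟩
  have h3 : |Real.sin ((x-y)/2)| ≤ |x - y|/2 := by
    calc |Real.sin ((x-y)/2)| ≤ |(x-y)/2| := Real.abs_sin_le_abs
      _ = |x - y|/2 := by rw [abs_div]; norm_num
  have h4 : Real.cos x - Real.cos y ≤ |x - y| := by
    calc Real.cos x - Real.cos y = -2 * Real.sin ((x + y)/2) * Real.sin ((x - y)/2) := h1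
      _ ≤ |(-2) * Real.sin ((x + y)/2) * Real.sin ((x - y)/2)| := le_abs_self _
      _ = 2 * |Real.sin ((x + y)/2)| * |Real.sin ((x - y)/2)| := by
          rw [abs_mul, abs_mul]; norm_num
      _ ≤ 2 * 1 * (|x - y|/2) := by
          apply mul_le_mul (mul_le_mul le_rfl h2 (abs_nonneg _) (by norm_num)) h3
            (abs_nonneg _) (by norm_num)
      _ = |x - y| := by ring
  linarith

lemma re_oneSub (θ t : ℝ) :
    (1 - Complex.exp (θ * Complex.I) * t).re = 1 - Real.cos θ * t := by
  simp [Complex.exp_ofReal_mul_I_re]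

lemma quarter_le (θ t : ℝ) (hc : Real.cos θ ≤ 3/4) (ht0 : 0 ≤ t) (ht1 : t ≤ 1) :
    (1/4 : ℝ) ≤ (1 - Complex.exp (θ * Complex.I) * t).re := by
  rw [re_oneSub]
  nlinarith [Real.neg_one_le_cos θ]

lemma oneSub_slit (θ t : ℝ) (hc : Real.cos θ ≤ 3/4) (ht0 : 0 ≤ t) (ht1 : t ≤ 1) :
    (1 - Complex.exp (θ * Complex.I) * t) ∈ Complex.slitPlane :=
  Complex.mem_slitPlane_iff.2 (Or.inl (lt_of_lt_of_le (by norm_num) (quarter_le θ t hc ht0 ht1)))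

lemma quarter_le_abs (θ t : ℝ) (hc : Real.cos θ ≤ 3/4) (ht0 : 0 ≤ t) (ht1 : t ≤ 1) :
    (1/4 : ℝ) ≤ ‖1 - Complex.exp (θ * Complex.I) * t‖ :=
  le_trans (quarter_le θ t hc ht0 ht1) (Complex.re_le_norm _)

lemma hasDerivAt_one_sub_exp (t : ℝ) (x : ℝ) :
    HasDerivAt (fun y : ℝ => 1 - Complex.exp (y * Complex.I) * t)
      (-(Complex.I * Complex.exp (x * Complex.I) * t)) x := by
  have h1 : HasDerivAt (fun z : ℂ => Complex.exp (z * Complex.I))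
      (Complex.exp ((x:ℂ) * Complex.I) * Complex.I) (x:ℂ) :=
    (Complex.hasDerivAt_exp _).comp _ (hasDerivAt_mul_const Complex.I)
  have h2 := h1.comp_ofReal
  have h3 := (h2.mul_const (t:ℂ)).const_sub 1
  exact h3.congr_deriv (by ring)

lemma hasDerivAt_im_Li2_exp {θ₀ : ℝ} (hc : Real.cos θ₀ ≤ 1/2) :
    HasDerivAt (fun θ : ℝ => (Li2 (Complex.exp (θ * Complex.I))).im)
      (-Real.log (‖1 - Complex.exp (θ₀ * Complex.I)‖)) θ₀ := by
  set z : ℂ := Complex.exp (θ₀ * Complex.I) with hz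
  set F : ℝ → ℝ → ℂ := fun θ t => Complex.log (1 - Complex.exp (θ * Complex.I) * t) / t
    with hF
  set F' : ℝ → ℝ → ℂ :=
    fun x t => -(Complex.I * Complex.exp (x * Complex.I)) / (1 - Complex.exp (x * Complex.I) * t)
    with hF'
  have hball : ∀ x ∈ ball θ₀ (1/4 : ℝ), Real.cos x ≤ 3/4 := by
    intro x hx
    rw [mem_ball, Real.dist_eq] at hx
    have := cos_near x θ₀
    linarith
  have hmeasF : ∀ x : ℝ, AEStronglyMeasurable (F x) (volume.restrict (Ι (0:ℝ) 1)) := by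
    intro x
    apply Measurable.aestronglyMeasurable
    exact ((Complex.measurable_log.comp
      (measurable_const.sub (Complex.measurable_ofReal.const_mul _))).div
      Complex.measurable_ofReal)
  have hmeasF' : AEStronglyMeasurable (F' θ₀) (volume.restrict (Ι (0:ℝ) 1)) := by
    apply Measurable.aestronglyMeasurable
    exact measurable_const.div
      (measurable_const.sub (Complex.measurable_ofReal.const_mul _))
  -- integrability of F θ₀
  have hlogbound : ∀ t ∈ Icc (0:ℝ) 1, ‖Complex.log (1 - z * t)‖ ≤ 4 * t := by
    intro t ht
    have hmvt := Convex.norm_image_sub_le_of_norm_hasDerivWithin_le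
      (f := fun s : ℝ => Complex.log (1 - z * s))
      (f' := fun s : ℝ => -(z * 1) / (1 - z * s)) (s := Icc (0:ℝ) 1) (C := 4)
      (fun s hs => by
        have h1 : HasDerivAt (fun s : ℝ => 1 - z * (s : ℂ)) (-(z * 1)) s := by
          simpa using ((Complex.ofRealCLM.hasDerivAt.const_mul z).const_sub 1)
        exact (h1.clog_real (oneSub_slit θ₀ s (by linarith) hs.1 hs.2)).hasDerivWithinAt)
      (fun s hs => by
        rw [norm_div]
        have h4 := quarter_le_abs θ₀ s (by linarith) hs.1 hs.2
        rw [norm_neg, norm_mul, norm_one, mul_one]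
        rw [← hz] at h4
        have h5 : ‖z‖ = 1 := by rw [hz, Complex.norm_exp_ofReal_mul_I]
        rw [h5]
        rw [div_le_iff₀ (by linarith)]
        linarith)
      (convex_Icc 0 1) (left_mem_Icc.2 zero_le_one) ht
    simpa [Real.norm_eq_abs, _root_.abs_of_nonneg ht.1] using hmvt
  have hFbound : ∀ t ∈ Ioc (0:ℝ) 1, ‖F θ₀ t‖ ≤ 4 := by
    intro t ht
    rw [hF]
    simp only
    rw [norm_div, Complex.norm_real, Real.norm_eq_abs, abs_of_pos ht.1]
    rw [div_le_iff₀ ht.1]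
    exact hlogbound t ⟨ht.1.le, ht.2⟩
  have hFint : IntervalIntegrable (F θ₀) volume 0 1 := by
    rw [intervalIntegrable_iff, uIoc_of_le zero_le_one]
    refine Integrable.mono' (integrable_const 4) ((hmeasF θ₀).mono_measure ?_) ?_
    · exact Measure.restrict_mono (by rw [uIoc_of_le zero_le_one]) le_rfl
    · rw [ae_restrict_iff' measurableSet_Ioc]
      exact ae_of_all _ hFbound
  -- differentiation under the integral
  have hmain := intervalIntegral.hasDerivAt_integral_of_dominated_loc_of_deriv_le
    (F := F) (F' := F') (x₀ := θ₀) (a := 0) (b := 1) (μ := volume)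
    (bound := fun _ => 4) (ball_mem_nhds θ₀ (by norm_num : (0:ℝ) < 1/4))
    (Filter.Eventually.of_forall fun x => hmeasF x) hFint hmeasF'
    (ae_of_all _ ?_) (intervalIntegrable_const) (ae_of_all _ ?_)
  · -- conclude
    obtain ⟨-, hder⟩ := hmain
    -- compute the integral of F' θ₀
    have hIval : (∫ t in (0:ℝ)..1, F' θ₀ t) = Complex.log (1 - z) * Complex.I := by
      have hftc := intervalIntegral.integral_eq_sub_of_hasDerivAt
        (f := fun t : ℝ => Complex.log (1 - z * t) * Complex.I)
        (f' := F' θ₀) (a := 0) (b := 1)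
        (fun t ht => by
          rw [uIcc_of_le zero_le_one] at ht
          have h1 : HasDerivAt (fun s : ℝ => 1 - z * (s : ℂ)) (-(z * 1)) t := by
            simpa using ((Complex.ofRealCLM.hasDerivAt.const_mul z).const_sub 1)
          have h2 := (h1.clog_real (oneSub_slit θ₀ t (by linarith) ht.1 ht.2)).mul_const
            Complex.I
          refine h2.congr_deriv ?_
          rw [hF']
          simp only [hz]
          ring)
        ?_
      · rw [hftc]
        push_cast
        simp
      · -- interval integrability of F' θ₀
        apply ContinuousOn.intervalIntegrable
        rw [uIcc_of_le zero_le_one]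
        apply ContinuousOn.div continuousOn_const
        · fun_prop
        · intro t ht
          intro h0
          have := quarter_le_abs θ₀ t (by linarith) ht.1 ht.2
          rw [h0] at this
          simp at this
          linarith
    rw [hIval] at hder
    have hLi : HasDerivAt (fun θ : ℝ => Li2 (Complex.exp (θ * Complex.I)))
        (-(Complex.log (1 - z) * Complex.I)) θ₀ := hder.neg
    have hIm := (Complex.imCLM.hasFDerivAt.comp θ₀ hLi.hasFDerivAt).hasDerivAt
    refine hIm.congr_deriv ?_
    simp [Complex.log_re]
  · -- bound on F'
    intro t ht x hx
    rw [hF']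
    simp only
    rw [norm_div, norm_neg, norm_mul]
    have habs := quarter_le_abs x t (hball x hx) (le_of_lt (by
      rw [uIoc_of_le zero_le_one] at ht; exact ht.1))
      (by rw [uIoc_of_le zero_le_one] at ht; exact ht.2)
    rw [
      Complex.norm_I, Complex.norm_exp_ofReal_mul_I, one_mul]
    rw [div_le_iff₀ (by linarith)]
    linarith
  · -- differentiability in θ
    intro t ht x hx
    rw [uIoc_of_le zero_le_one] at ht
    have h1 := hasDerivAt_one_sub_exp t x
    have h2 := (h1.clog_real (oneSub_slit x t (hball x hx) ht.1.le ht.2)).div_const (t : ℂ)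
    refine h2.congr_deriv ?_
    rw [hF']
    have ht0 : (t:ℂ) ≠ 0 := by exact_mod_cast ht.1.ne'
    have hne : (1 - Complex.exp (x * Complex.I) * t) ≠ 0 := by
      intro h0
      have := quarter_le_abs x t (hball x hx) ht.1.le ht.2
      rw [h0] at this
      simp at this
      linarith
    field_simp

lemma normSq_one_sub_exp (θ : ℝ) :
    Complex.normSq (1 - Complex.exp (θ * Complex.I)) = 2 - 2 * Real.cos θ := by
  simp only [Complex.normSq_apply, Complex.sub_re, Complex.sub_im,
    Complex.exp_ofReal_mul_I_re, Complex.exp_ofReal_mul_I_im, Complex.one_re, Complex.one_im]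
  nlinarith [Real.sin_sq_add_cos_sq θ]

lemma abs_one_sub_exp_sq (θ : ℝ) :
    (‖1 - Complex.exp (θ * Complex.I)‖)^2 = 2 - 2 * Real.cos θ := by
  rw [Complex.sq_norm]; exact normSq_one_sub_exp θ

lemma cos_le_half {θ : ℝ} (h1 : π/3 ≤ θ) (h2 : θ ≤ 5*π/3) : Real.cos θ ≤ 1/2 := by
  have hπ := Real.pi_pos
  rcases le_total θ π with h | h
  · have := Real.cos_le_cos_of_nonneg_of_le_pi (by positivity) h h1
    rwa [Real.cos_pi_div_three] at this
  · have := Real.cos_le_cos_of_nonneg_of_le_pi (by positivity)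
      (by linarith : 2*π - θ ≤ π) (by linarith : π/3 ≤ 2*π - θ)
    rwa [Real.cos_pi_div_three, Real.cos_two_pi_sub] at this

lemma half_le_cos₁ {θ : ℝ} (h1 : 0 ≤ θ) (h2 : θ ≤ π/3) : 1/2 ≤ Real.cos θ := by
  have hπ := Real.pi_pos
  have := Real.cos_le_cos_of_nonneg_of_le_pi h1 (by linarith : π/3 ≤ π) h2
  rwa [Real.cos_pi_div_three] at this

lemma half_le_cos₂ {θ : ℝ} (h1 : 5*π/3 ≤ θ) (h2 : θ ≤ 2*π) : 1/2 ≤ Real.cos θ := by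
  have hπ := Real.pi_pos
  have := Real.cos_le_cos_of_nonneg_of_le_pi (by linarith : (0:ℝ) ≤ 2*π - θ)
    (by linarith : π/3 ≤ π) (by linarith : 2*π - θ ≤ π/3)
  rwa [Real.cos_pi_div_three, Real.cos_two_pi_sub] at this

lemma cos_ne_half {θ : ℝ} (h0 : 0 < θ) (h2 : θ ≤ 2*π) (hne1 : θ ≠ π/3)
    (hne2 : θ ≠ 5*π/3) : Real.cos θ ≠ 1/2 := by
  have hπ := Real.pi_pos
  intro heq
  rcases le_or_gt θ π with h | h
  · have : θ = π/3 := Real.injOn_cos ⟨h0.le, h⟩ ⟨by positivity, by linarith⟩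
      (by rw [heq, Real.cos_pi_div_three])
    exact hne1 this
  · have : 2*π - θ = π/3 := Real.injOn_cos ⟨by linarith, by linarith⟩
      ⟨by positivity, by linarith⟩
      (by rw [Real.cos_two_pi_sub, heq, Real.cos_pi_div_three])
    exact hne2 (by linarith)

lemma exp_five_pi_thirds : Complex.exp ((5*π/3 : ℝ) * Complex.I) =
    Complex.exp ((-(π/3) : ℝ) * Complex.I) := by
  rw [show ((5*π/3 : ℝ) : ℂ) * Complex.I = ((-(π/3) : ℝ) : ℂ) * Complex.I + 2*π*Complex.I by
    push_cast; ring]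
  rw [Complex.exp_add, Complex.exp_two_pi_mul_I, mul_one]

lemma exp_neg_conj : Complex.exp ((-(π/3) : ℝ) * Complex.I) =
    (starRingEnd ℂ) (Complex.exp ((π/3 : ℝ) * Complex.I)) := by
  rw [← Complex.exp_conj, map_mul, Complex.conj_ofReal, Complex.conj_I]
  congr 1
  push_cast
  ring

lemma interval_conj (f : ℝ → ℂ) (a b : ℝ) :
    (∫ t in a..b, (starRingEnd ℂ) (f t)) = (starRingEnd ℂ) (∫ t in a..b, f t) := by
  rw [intervalIntegral, intervalIntegral, integral_conj, integral_conj, ← map_sub]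

lemma re_oneSub' (θ t : ℝ) :
    (1 - Complex.exp (θ * Complex.I) * t).re = 1 - Real.cos θ * t := by
  simp [Complex.exp_ofReal_mul_I_re]

lemma Li2_conj : Li2 (Complex.exp ((-(π/3) : ℝ) * Complex.I)) =
    (starRingEnd ℂ) (Li2 (Complex.exp ((π/3 : ℝ) * Complex.I))) := by
  rw [exp_neg_conj]
  set w : ℂ := Complex.exp ((π/3 : ℝ) * Complex.I) with hw
  have key : ∀ t ∈ Set.uIcc (0:ℝ) 1,
      Complex.log (1 - (starRingEnd ℂ) w * t) / t =
        (starRingEnd ℂ) (Complex.log (1 - w * t) / t) := by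
    intro t ht
    rw [Set.uIcc_of_le zero_le_one] at ht
    have hconj : 1 - (starRingEnd ℂ) w * (t:ℂ) = (starRingEnd ℂ) (1 - w * t) := by
      rw [map_sub, map_one, map_mul, Complex.conj_ofReal]
    have hre : (0:ℝ) < (1 - w * t).re := by
      rw [hw, re_oneSub', Real.cos_pi_div_three]
      nlinarith [ht.1, ht.2]
    have harg : (1 - w * (t:ℂ)).arg ≠ π := by
      intro h
      have := Complex.arg_eq_pi_iff.1 h
      linarith [this.1]
    rw [hconj, Complex.log_conj _ harg, map_div₀, Complex.conj_ofReal]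
  unfold Li2
  rw [intervalIntegral.integral_congr key, interval_conj, ← map_neg]

lemma abs_exp_pi3 : ‖Complex.exp ((π/3 : ℝ) * Complex.I)‖ = 1 :=
  Complex.norm_exp_ofReal_mul_I _

lemma abs_exp_neg_pi3 : ‖Complex.exp ((-(π/3) : ℝ) * Complex.I)‖ = 1 :=
  Complex.norm_exp_ofReal_mul_I _

lemma abs_one_sub_exp_ne {θ : ℝ} (hc : Real.cos θ ≤ 1/2) :
    ‖1 - Complex.exp (θ * Complex.I)‖ ≠ 0 := by
  intro h
  have := abs_one_sub_exp_sq θ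
  rw [h] at this
  nlinarith

lemma cont_log_abs : ContinuousOn
    (fun θ : ℝ => Real.log (‖1 - Complex.exp (θ * Complex.I)‖))
    (Set.Icc (π/3) (5*π/3)) := by
  apply ContinuousOn.log
  · exact (continuous_norm.comp (by continuity)).continuousOn
  · intro θ hθ
    exact abs_one_sub_exp_ne (cos_le_half hθ.1 hθ.2)

lemma ftc_main : ∫ θ in (π/3 : ℝ)..(5*π/3),
      Real.log (‖1 - Complex.exp (θ * Complex.I)‖) =
    (Li2 (Complex.exp ((π/3 : ℝ) * Complex.I))).im -
      (Li2 (Complex.exp ((5*π/3 : ℝ) * Complex.I))).im := by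
  have hπ := Real.pi_pos
  have hle : (π/3 : ℝ) ≤ 5*π/3 := by linarith
  have h := intervalIntegral.integral_eq_sub_of_hasDerivAt
    (f := fun θ : ℝ => (Li2 (Complex.exp (θ * Complex.I))).im)
    (f' := fun θ : ℝ => -Real.log (‖1 - Complex.exp (θ * Complex.I)‖))
    (a := π/3) (b := 5*π/3)
    (fun θ hθ => by
      rw [Set.uIcc_of_le hle] at hθ
      exact hasDerivAt_im_Li2_exp (cos_le_half hθ.1 hθ.2))
    (by
      apply ContinuousOn.intervalIntegrable
      rw [Set.uIcc_of_le hle]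
      exact cont_log_abs.neg)
  rw [intervalIntegral.integral_neg] at h
  linarith [h]



/-- `2π · m(x + y − 1) = D(e^{iπ/3}) − D(e^{−iπ/3})`. -/
theorem two_pi_mahler_eq_blochWigner :
    2 * π * mahlerMeasure2 (fun x y => x + y - 1) =
      blochWigner (Complex.exp ((π / 3 : ℝ) * Complex.I)) -
        blochWigner (Complex.exp ((-(π / 3) : ℝ) * Complex.I)) := by
  have hπ := Real.pi_pos
  -- inner integral via Jensen
  have hinner : ∀ θ : ℝ, ‖1 - Complex.exp (θ * Complex.I)‖ ≠ 1 →
      (∫ φ in (0:ℝ)..(2*π), Real.log (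
        ‖Complex.exp (θ * Complex.I) + Complex.exp (φ * Complex.I) - 1‖)) =
      2 * π * max (Real.log (‖1 - Complex.exp (θ * Complex.I)‖)) 0 := by
    intro θ hθ
    have ha : ‖Complex.exp (θ * Complex.I) - 1‖ ≠ 1 := by
      rwa [norm_sub_rev]
    have hj := jensen_circle (Complex.exp (θ * Complex.I) - 1) ha
    have heq : ∀ φ : ℝ, Complex.exp (θ * Complex.I) + Complex.exp (φ * Complex.I) - 1 =
        (Complex.exp (θ * Complex.I) - 1) + Complex.exp (φ * Complex.I) := fun φ => by ring
    calc (∫ φ in (0:ℝ)..(2*π), Real.log (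
          ‖Complex.exp (θ * Complex.I) + Complex.exp (φ * Complex.I) - 1‖))
        = ∫ φ in (0:ℝ)..(2*π), Real.log (
            ‖(Complex.exp (θ * Complex.I) - 1) + Complex.exp (φ * Complex.I)‖) := by
          refine intervalIntegral.integral_congr fun φ _ => ?_
          rw [heq φ]
      _ = 2 * π * max (Real.log (‖Complex.exp (θ * Complex.I) - 1‖)) 0 := hj
      _ = 2 * π * max (Real.log (‖1 - Complex.exp (θ * Complex.I)‖)) 0 := by
          rw [norm_sub_rev]
  -- a.e. rewrite of the outer integral
  have hae : ∀ᵐ θ : ℝ, θ ∈ Set.uIoc (0:ℝ) (2*π) →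
      (∫ φ in (0:ℝ)..(2*π), Real.log (
        ‖Complex.exp (θ * Complex.I) + Complex.exp (φ * Complex.I) - 1‖)) =
      2 * π * max (Real.log (‖1 - Complex.exp (θ * Complex.I)‖)) 0 := by
    have hzero : (volume : Measure ℝ) ({π/3, 5*π/3} : Set ℝ) = 0 :=
      (Set.toFinite _).measure_zero volume
    have hnm : ∀ᵐ θ : ℝ, θ ∉ ({π/3, 5*π/3} : Set ℝ) :=
      measure_eq_zero_iff_ae_notMem.1 hzero
    filter_upwards [hnm] with θ hθ hmem
    rw [Set.uIoc_of_le (by linarith : (0:ℝ) ≤ 2*π)] at hmem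
    simp only [Set.mem_insert_iff, Set.mem_singleton_iff, not_or] at hθ
    apply hinner
    intro habs1
    have hsq := abs_one_sub_exp_sq θ
    rw [habs1] at hsq
    have hcos : Real.cos θ = 1/2 := by nlinarith
    exact cos_ne_half hmem.1 hmem.2 hθ.1 hθ.2 hcos
  have houter : (∫ θ in (0:ℝ)..(2*π), ∫ φ in (0:ℝ)..(2*π), Real.log (
        ‖Complex.exp (θ * Complex.I) + Complex.exp (φ * Complex.I) - 1‖)) =
      2 * π * ∫ θ in (0:ℝ)..(2*π),
        max (Real.log (‖1 - Complex.exp (θ * Complex.I)‖)) 0 := by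
    rw [intervalIntegral.integral_congr_ae hae, intervalIntegral.integral_const_mul]
  -- split the integral of the max
  set mf : ℝ → ℝ := fun θ => max (Real.log (‖1 - Complex.exp (θ * Complex.I)‖)) 0
    with hmf
  have hmf1 : Set.EqOn mf 0 (Set.uIcc (0:ℝ) (π/3)) := by
    intro θ hθ
    rw [Set.uIcc_of_le (by positivity : (0:ℝ) ≤ π/3)] at hθ
    have hcos := half_le_cos₁ hθ.1 hθ.2
    have hsq := abs_one_sub_exp_sq θ
    have habs : ‖1 - Complex.exp (θ * Complex.I)‖ ≤ 1 := by nlinarith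
    simp only [hmf, Pi.zero_apply]
    exact max_eq_right (Real.log_nonpos (norm_nonneg _) habs)
  have hmf3 : Set.EqOn mf 0 (Set.uIcc (5*π/3 : ℝ) (2*π)) := by
    intro θ hθ
    rw [Set.uIcc_of_le (by linarith : (5*π/3:ℝ) ≤ 2*π)] at hθ
    have hcos := half_le_cos₂ hθ.1 hθ.2
    have hsq := abs_one_sub_exp_sq θ
    have habs : ‖1 - Complex.exp (θ * Complex.I)‖ ≤ 1 := by nlinarith
    simp only [hmf, Pi.zero_apply]
    exact max_eq_right (Real.log_nonpos (norm_nonneg _) habs)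
  have hmf2 : Set.EqOn mf
      (fun θ => Real.log (‖1 - Complex.exp (θ * Complex.I)‖))
      (Set.uIcc (π/3 : ℝ) (5*π/3)) := by
    intro θ hθ
    rw [Set.uIcc_of_le (by linarith : (π/3:ℝ) ≤ 5*π/3)] at hθ
    have hcos := cos_le_half hθ.1 hθ.2
    have hsq := abs_one_sub_exp_sq θ
    have habs : 1 ≤ ‖1 - Complex.exp (θ * Complex.I)‖ := by
      nlinarith [norm_nonneg (1 - Complex.exp (θ * Complex.I))]
    simp only [hmf]
    exact max_eq_left (Real.log_nonneg habs)
  have hint1 : IntervalIntegrable mf volume 0 (π/3) := by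
    refine (_root_.intervalIntegrable_const (c := (0:ℝ))).congr ?_
    exact fun θ hθ => (hmf1 (Set.uIoc_subset_uIcc hθ)).symm
  have hint3 : IntervalIntegrable mf volume (5*π/3) (2*π) := by
    refine (_root_.intervalIntegrable_const (c := (0:ℝ))).congr ?_
    exact fun θ hθ => (hmf3 (Set.uIoc_subset_uIcc hθ)).symm
  have hint2 : IntervalIntegrable mf volume (π/3) (5*π/3) := by
    refine (cont_log_abs.intervalIntegrable_of_Icc (by linarith)).congr ?_
    exact fun θ hθ => (hmf2 (Set.uIoc_subset_uIcc hθ)).symm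
  have hsplit : (∫ θ in (0:ℝ)..(2*π), mf θ) =
      ∫ θ in (π/3 : ℝ)..(5*π/3),
        Real.log (‖1 - Complex.exp (θ * Complex.I)‖) := by
    have h12 := intervalIntegral.integral_add_adjacent_intervals hint1 hint2
    have h123 := intervalIntegral.integral_add_adjacent_intervals
      (hint1.trans hint2) hint3
    rw [← h123, ← h12]
    rw [intervalIntegral.integral_congr hmf1, intervalIntegral.integral_congr hmf3,
      intervalIntegral.integral_congr hmf2]
    simp
  -- right-hand side values
  have hbw1 : blochWigner (Complex.exp ((π/3 : ℝ) * Complex.I)) =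
      (Li2 (Complex.exp ((π/3 : ℝ) * Complex.I))).im := by
    rw [blochWigner, abs_exp_pi3, Real.log_one, mul_zero, add_zero]
  have hbw2 : blochWigner (Complex.exp ((-(π/3) : ℝ) * Complex.I)) =
      -(Li2 (Complex.exp ((π/3 : ℝ) * Complex.I))).im := by
    rw [blochWigner, abs_exp_neg_pi3, Real.log_one, mul_zero, add_zero, Li2_conj]
    simp
  have hL5 : (Li2 (Complex.exp ((5*π/3 : ℝ) * Complex.I))).im =
      -(Li2 (Complex.exp ((π/3 : ℝ) * Complex.I))).im := by
    rw [exp_five_pi_thirds, Li2_conj]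
    simp
  -- assemble
  rw [mahlerMeasure2, houter, hbw1, hbw2]
  rw [show (∫ θ in (0:ℝ)..(2*π),
      max (Real.log (‖1 - Complex.exp (θ * Complex.I)‖)) 0) =
      ∫ θ in (0:ℝ)..(2*π), mf θ from rfl]
  rw [hsplit, ftc_main, hL5]
  have h2π : (2*π) ≠ 0 := by positivity
  field_simp
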